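/- Fix integers p ≥ 1, m ≥ 1 and a real ν > 0. For any vectors v₁, …, v_m ∈ ℝ^p and any symmetric positive definite p×p real matrix Σ, the Euclidean norm of Σ_{t=1}^m v_t/(1 + v_tᵀΣ⁻¹v_t/ν) is at most (m/2)·√ν·√(λ_max(Σ)). -/

import Mathlib

open Matrix

/-- The Euclidean norm on `ℝ^p` (as functions `Fin p → ℝ`). -/
noncomputable def euclNorm {p : ℕ} (v : Fin p → ℝ) : ℝ := Real.sqrt (∑ i, v i ^ 2)

lemma euclNorm_eq {p : ℕ} (w : Fin p → ℝ) :
    euclNorm w = ‖(WithLp.equiv 2 (Fin p → ℝ)).symm w‖ := by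
  rw [EuclideanSpace.norm_eq, euclNorm]
  congr 1
  exact Finset.sum_congr rfl fun i _ => by
    rw [Real.norm_eq_abs, sq_abs]; rfl

lemma euclNorm_sum_le {p m : ℕ} (w : Fin m → Fin p → ℝ) :
    euclNorm (∑ t, w t) ≤ ∑ t, euclNorm (w t) := by
  simp only [euclNorm_eq]
  rw [show (WithLp.equiv 2 (Fin p → ℝ)).symm (∑ t, w t)
      = ∑ t, (WithLp.equiv 2 (Fin p → ℝ)).symm (w t) by
        simp only [WithLp.equiv_symm_apply, WithLp.toLp_sum]]
  exact norm_sum_le _ _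

lemma euclNorm_smul {p : ℕ} (c : ℝ) (hc : 0 ≤ c) (w : Fin p → ℝ) :
    euclNorm (c • w) = c * euclNorm w := by
  rw [euclNorm, euclNorm]
  have : ∑ i, (c • w) i ^ 2 = c ^ 2 * ∑ i, w i ^ 2 := by
    rw [Finset.mul_sum]; exact Finset.sum_congr rfl fun i _ => by simp [mul_pow]
  rw [this, Real.sqrt_mul (by positivity), Real.sqrt_sq hc]

lemma key_quad {p : ℕ} (S : Matrix (Fin p) (Fin p) ℝ) (hS : S.PosDef) (x : Fin p → ℝ) :
    ∑ i, x i ^ 2 ≤ (⨆ i, hS.1.eigenvalues i) * (x ⬝ᵥ S⁻¹ *ᵥ x) := by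
  have h := hS.1
  have hpos : ∀ i, 0 < h.eigenvalues i := hS.eigenvalues_pos
  set U : Matrix (Fin p) (Fin p) ℝ := (h.eigenvectorUnitary : Matrix (Fin p) (Fin p) ℝ) with hU
  have hUU : U * star U = 1 := (Matrix.mem_unitaryGroup_iff).mp h.eigenvectorUnitary.2
  have hUU' : star U * U = 1 := (Matrix.mem_unitaryGroup_iff').mp h.eigenvectorUnitary.2
  have hspec : S = U * diagonal h.eigenvalues * star U := by simpa using h.spectral_theorem
  set A : Matrix (Fin p) (Fin p) ℝ := U * diagonal (fun i => (h.eigenvalues i)⁻¹) * star U with hA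
  have hinv : S⁻¹ = A := by
    apply Matrix.inv_eq_left_inv
    have h1 : A * S = A * (U * diagonal h.eigenvalues * star U) := by rw [← hspec]
    rw [h1, hA]
    calc U * diagonal (fun i => (h.eigenvalues i)⁻¹) * star U * (U * diagonal h.eigenvalues * star U)
        = U * (diagonal (fun i => (h.eigenvalues i)⁻¹) * ((star U * U) * diagonal h.eigenvalues)) * star U := by
          noncomm_ring
      _ = 1 := by
          rw [hUU', one_mul, diagonal_mul_diagonal]
          have : (fun i => (h.eigenvalues i)⁻¹ * h.eigenvalues i) = fun _ => (1:ℝ) := by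
            funext i; exact inv_mul_cancel₀ (hpos i).ne'
          rw [this, diagonal_one, mul_one, hUU]
  set y : Fin p → ℝ := star U *ᵥ x with hy
  have hT : Uᵀ = star U := by
    rw [Matrix.star_eq_conjTranspose, conjTranspose_eq_transpose_of_trivial]
  have hquad : x ⬝ᵥ S⁻¹ *ᵥ x = ∑ i, (h.eigenvalues i)⁻¹ * y i ^ 2 := by
    rw [hinv, hA, ← mulVec_mulVec, ← mulVec_mulVec, dotProduct_mulVec, ← mulVec_transpose, hT, ← hy]
    simp [dotProduct, mulVec_diagonal]
    exact Finset.sum_congr rfl fun i _ => by ring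
  have hnorm : ∑ i, x i ^ 2 = ∑ i, y i ^ 2 := by
    have hx : U *ᵥ y = x := by
      rw [hy, mulVec_mulVec, hUU, one_mulVec]
    have h2 : x ⬝ᵥ x = y ⬝ᵥ y := by
      conv_lhs => rw [← hx]
      rw [dotProduct_mulVec, ← mulVec_transpose, hT, mulVec_mulVec, hUU', one_mulVec]
    simpa [dotProduct, pow_two] using h2
  have hbdd : BddAbove (Set.range h.eigenvalues) := Set.Finite.bddAbove (Set.finite_range _)
  have hle : ∀ i, h.eigenvalues i ≤ ⨆ i, h.eigenvalues i := fun i => le_ciSup hbdd i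
  rw [hnorm, hquad, Finset.mul_sum]
  apply Finset.sum_le_sum
  intro i _
  have hev := hpos i
  calc y i ^ 2 = h.eigenvalues i * ((h.eigenvalues i)⁻¹ * y i ^ 2) := by
        field_simp
    _ ≤ (⨆ j, h.eigenvalues j) * ((h.eigenvalues i)⁻¹ * y i ^ 2) := by
        apply mul_le_mul_of_nonneg_right (hle i)
        positivity

/-- Worst-case bound on the total contribution of `m` arbitrary (adversarial) outliers
to the first-order condition of the robust location estimator: for any `v₁, …, v_m ∈ ℝ^p`
and symmetric positive definite `Σ`,
`‖Σₜ vₜ/(1 + vₜᵀΣ⁻¹vₜ/ν)‖ ≤ (m/2)·√ν·√(λ_max(Σ))`. -/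
theorem outlier_location_contribution_bound {p m : ℕ} (hp : 1 ≤ p) (hm : 1 ≤ m)
    {ν : ℝ} (hν : 0 < ν)
    (v : Fin m → Fin p → ℝ) (S : Matrix (Fin p) (Fin p) ℝ) (hS : S.PosDef) :
    euclNorm (∑ t, (1 + (v t ⬝ᵥ (S⁻¹ *ᵥ v t)) / ν)⁻¹ • v t)
      ≤ ((m : ℝ) / 2) * Real.sqrt ν * Real.sqrt (⨆ i, hS.1.eigenvalues i) := by
  set L : ℝ := ⨆ i, hS.1.eigenvalues i with hL
  have hLpos : 0 < L := by
    have hbdd : BddAbove (Set.range hS.1.eigenvalues) := Set.Finite.bddAbove (Set.finite_range _)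
    have i0 : Fin p := ⟨0, hp⟩
    exact lt_of_lt_of_le (hS.eigenvalues_pos i0) (le_ciSup hbdd i0)
  have hterm : ∀ t, euclNorm ((1 + (v t ⬝ᵥ (S⁻¹ *ᵥ v t)) / ν)⁻¹ • v t)
      ≤ (1 / 2) * Real.sqrt ν * Real.sqrt L := by
    intro t
    set q : ℝ := v t ⬝ᵥ (S⁻¹ *ᵥ v t) with hq
    have hkey : ∑ i, v t i ^ 2 ≤ L * q := key_quad S hS (v t)
    have hsq : 0 ≤ ∑ i, v t i ^ 2 := Finset.sum_nonneg fun i _ => sq_nonneg _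
    have hq0 : 0 ≤ q := by nlinarith
    have hden : 0 < 1 + q / ν := by positivity
    have hc0 : 0 ≤ (1 + q / ν)⁻¹ := le_of_lt (inv_pos.mpr hden)
    rw [euclNorm_smul _ hc0]
    have h1 : euclNorm (v t) ≤ Real.sqrt (L * q) := by
      rw [euclNorm]
      exact Real.sqrt_le_sqrt hkey
    have h2 : (1 + q / ν)⁻¹ * Real.sqrt (L * q) ≤ (1 / 2) * Real.sqrt ν * Real.sqrt L := by
      rw [Real.sqrt_mul (le_of_lt hLpos)]
      rw [inv_mul_le_iff₀ hden]
      have hsq2 : Real.sqrt q ^ 2 = q := Real.sq_sqrt hq0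
      have hsν : Real.sqrt ν ^ 2 = ν := Real.sq_sqrt (le_of_lt hν)
      have hsνpos : 0 < Real.sqrt ν := Real.sqrt_pos.mpr hν
      have hsL : 0 ≤ Real.sqrt L := Real.sqrt_nonneg L
      have key : Real.sqrt q ≤ (1 / 2) * Real.sqrt ν * (1 + q / ν) := by
        have heq : (1 / 2) * Real.sqrt ν * (1 + q / ν) = (ν + q) / (2 * Real.sqrt ν) := by
          field_simp
          nlinarith [hsν]
        rw [heq, le_div_iff₀ (by positivity)]
        nlinarith [sq_nonneg (Real.sqrt q - Real.sqrt ν)]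
      calc Real.sqrt L * Real.sqrt q ≤ Real.sqrt L * ((1 / 2) * Real.sqrt ν * (1 + q / ν)) :=
            mul_le_mul_of_nonneg_left key hsL
        _ = (1 + q / ν) * ((1 / 2) * Real.sqrt ν * Real.sqrt L) := by ring
    calc (1 + q / ν)⁻¹ * euclNorm (v t) ≤ (1 + q / ν)⁻¹ * Real.sqrt (L * q) :=
          mul_le_mul_of_nonneg_left h1 hc0
      _ ≤ (1 / 2) * Real.sqrt ν * Real.sqrt L := h2
  calc euclNorm (∑ t, (1 + (v t ⬝ᵥ (S⁻¹ *ᵥ v t)) / ν)⁻¹ • v t)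
      ≤ ∑ t, euclNorm ((1 + (v t ⬝ᵥ (S⁻¹ *ᵥ v t)) / ν)⁻¹ • v t) := euclNorm_sum_le _
    _ ≤ ∑ _t : Fin m, (1 / 2) * Real.sqrt ν * Real.sqrt L :=
        Finset.sum_le_sum fun t _ => hterm t
    _ = ((m : ℝ) / 2) * Real.sqrt ν * Real.sqrt L := by
        rw [Finset.sum_const, Finset.card_univ, Fintype.card_fin, nsmul_eq_mul]
        ring
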